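/- Let ι : ℕ → ℝ be a strictly increasing sequence with ι(n) > 0 for all n and ι(n) → ∞, let a : ℕ → ℝ be nonnegative, and suppose the generalized Dirichlet series ∑_{n=0}^∞ a(n)·(ι(n))^{-s₀} converges at s₀ ∈ ℂ. Define the remainder R(u) := ∑_{n : ι(n) > u} a(n)·(ι(n))^{-s₀} for u ≥ 0. Then for all natural numbers M < N and every s ∈ ℂ, one has the identity ∑_{n=M+1}^{N} a(n)·(ι(n))^{-s} = R(ι(M))·(ι(M))^{s₀−s} − R(ι(N))·(ι(N))^{s₀−s} + (s₀−s)·∫_{ι(M)}^{ι(N)} R(u)·u^{s₀−s−1} du. -/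
import Mathlib


open Filter MeasureTheory

private lemma aux_deriv (w : ℂ) {u : ℝ} (hu : 0 < u) :
    HasDerivAt (fun x : ℝ => Complex.exp (w * (Real.log x : ℂ)))
      (w * Complex.exp ((w - 1) * (Real.log u : ℂ))) u := by
  have h1 : HasDerivAt Real.log u⁻¹ u := Real.hasDerivAt_log hu.ne'
  have h2 : HasDerivAt (fun x : ℝ => ((Real.log x : ℝ) : ℂ)) ((u⁻¹ : ℝ) : ℂ) u :=
    h1.ofReal_comp
  have h3 : HasDerivAt (fun x : ℝ => w * (Real.log x : ℂ)) (w * ((u⁻¹ : ℝ) : ℂ)) u :=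
    h2.const_mul w
  have h4 := h3.cexp
  convert h4 using 1
  have h5 : Complex.exp ((w - 1) * (Real.log u : ℂ))
      = Complex.exp (w * (Real.log u : ℂ)) * ((u⁻¹ : ℝ) : ℂ) := by
    rw [show (w - 1) * (Real.log u : ℂ) = w * (Real.log u : ℂ) + (-(Real.log u : ℂ)) by ring,
      Complex.exp_add]
    congr 1
    rw [← Complex.ofReal_neg, ← Complex.ofReal_exp, Real.exp_neg, Real.exp_log hu]
  rw [h5]; ring

/-- Abel summation identity for tails of a generalized Dirichlet series: with
`R u = ∑_{n : ι n > u} a n · (ι n)^(-s₀)` (given as the limit of its partial sums), for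
`M < N` and any `s ∈ ℂ`,
`∑_{n=M+1}^{N} a n (ι n)^{-s} = R(ι M)(ι M)^{s₀−s} − R(ι N)(ι N)^{s₀−s}
  + (s₀−s)·∫_{ι M}^{ι N} R(u) u^{s₀−s−1} du`. -/
theorem stmt_3 (ι : ℕ → ℝ) (hι : StrictMono ι) (hιpos : ∀ n, 0 < ι n)
    (hιtop : Tendsto ι atTop atTop)
    (a : ℕ → ℝ) (ha : ∀ n, 0 ≤ a n)
    (s₀ : ℂ)
    (hconv : ∃ L : ℂ, Tendsto
      (fun N : ℕ => ∑ n ∈ Finset.range N, (a n : ℂ) * Complex.exp (-s₀ * (Real.log (ι n) : ℂ)))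
      atTop (nhds L))
    (R : ℝ → ℂ)
    (hR : ∀ u : ℝ, Tendsto
      (fun N : ℕ => ∑ n ∈ Finset.range N,
        if u < ι n then (a n : ℂ) * Complex.exp (-s₀ * (Real.log (ι n) : ℂ)) else 0)
      atTop (nhds (R u)))
    (M N : ℕ) (hMN : M < N) (s : ℂ) :
    ∑ n ∈ Finset.Icc (M + 1) N, (a n : ℂ) * Complex.exp (-s * (Real.log (ι n) : ℂ))
      = R (ι M) * Complex.exp ((s₀ - s) * (Real.log (ι M) : ℂ))
        - R (ι N) * Complex.exp ((s₀ - s) * (Real.log (ι N) : ℂ))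
        + (s₀ - s) * ∫ u in (ι M)..(ι N), R u * Complex.exp ((s₀ - s - 1) * (Real.log u : ℂ)) := by
  set w : ℂ := s₀ - s with hw
  set c : ℕ → ℂ := fun n => (a n : ℂ) * Complex.exp (-s₀ * (Real.log (ι n) : ℂ)) with hc
  -- rewrite each summand
  have hterm : ∀ k, (a k : ℂ) * Complex.exp (-s * (Real.log (ι k) : ℂ))
      = c k * Complex.exp (w * (Real.log (ι k) : ℂ)) := by
    intro k
    rw [hc]
    rw [mul_assoc, ← Complex.exp_add]
    congr 2
    rw [hw]; ring
  -- step function property of R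
  have hstep : ∀ n : ℕ, ∀ u : ℝ, ι n ≤ u → u < ι (n + 1) → R u = R (ι n) := by
    intro n u h1 h2
    refine tendsto_nhds_unique (hR u) ((hR (ι n)).congr fun K => ?_)
    refine Finset.sum_congr rfl fun k _ => ?_
    refine if_congr ?_ rfl rfl
    constructor
    · intro h
      have : n < k := hι.lt_iff_lt.mp h
      exact h2.trans_le (hι.monotone this)
    · intro h
      exact h1.trans_lt h
  -- differences of R values
  have hdiff : ∀ n : ℕ, R (ι n) - R (ι (n + 1)) = c (n + 1) := by
    intro n
    refine tendsto_nhds_unique ((hR (ι n)).sub (hR (ι (n + 1)))) ?_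
    refine Tendsto.congr' ?_ tendsto_const_nhds
    filter_upwards [eventually_ge_atTop (n + 2)] with K hK
    rw [← Finset.sum_sub_distrib]
    have hpt : ∀ k, ((if ι n < ι k then c k else 0) - (if ι (n + 1) < ι k then c k else 0))
        = if k = n + 1 then c (n + 1) else 0 := by
      intro k
      by_cases hk1 : n < k
      · by_cases hk2 : k = n + 1
        · subst hk2
          rw [if_pos (hι.lt_iff_lt.mpr hk1), if_neg (by simp [hι.lt_iff_lt]), if_pos rfl]
          ring
        · have hk3 : n + 1 < k := by omega
          rw [if_pos (hι.lt_iff_lt.mpr hk1), if_pos (hι.lt_iff_lt.mpr hk3), if_neg hk2]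
          ring
      · have hk2 : ¬ (n + 1 < k) := by omega
        have hk3 : k ≠ n + 1 := by omega
        rw [if_neg (by simpa [hι.lt_iff_lt] using hk1),
          if_neg (by simpa [hι.lt_iff_lt] using hk2), if_neg hk3]
        ring
    rw [Finset.sum_congr rfl fun k _ => hpt k, Finset.sum_ite_eq' (Finset.range K) (n + 1),
      if_pos (Finset.mem_range.mpr (by omega))]
  -- continuity of the integrand kernel on each interval
  have hgcont : ∀ n : ℕ, ContinuousOn (fun u : ℝ => Complex.exp ((w - 1) * (Real.log u : ℂ)))
      (Set.uIcc (ι n) (ι (n + 1))) := by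
    intro n
    have hab : ι n ≤ ι (n + 1) := (hι n.lt_succ_self).le
    have hsub : Set.uIcc (ι n) (ι (n + 1)) ⊆ {x : ℝ | x ≠ 0} := by
      intro x hx
      rw [Set.uIcc_of_le hab] at hx
      exact ((hιpos n).trans_le hx.1).ne'
    exact (continuousOn_const.mul
      (Complex.continuous_ofReal.comp_continuousOn (Real.continuousOn_log.mono hsub))).cexp
  -- a.e. facts
  have hne : ∀ b : ℝ, ∀ᵐ u : ℝ, u ≠ b := by
    intro b
    rw [ae_iff]
    simpa [not_not, Set.setOf_eq_eq_singleton] using measure_singleton (b := b) (μ := volume)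
  have hmeq : ∀ n : ℕ, ∀ᵐ u : ℝ, u ∈ Set.uIoc (ι n) (ι (n + 1)) →
      R u * Complex.exp ((w - 1) * (Real.log u : ℂ))
        = R (ι n) * Complex.exp ((w - 1) * (Real.log u : ℂ)) := by
    intro n
    have hab : ι n ≤ ι (n + 1) := (hι n.lt_succ_self).le
    filter_upwards [hne (ι (n + 1))] with u hu h
    rw [Set.uIoc_of_le hab] at h
    rw [hstep n u h.1.le (lt_of_le_of_ne h.2 hu)]
  -- interval integrability of R u * kernel on each small interval
  have hInt : ∀ n : ℕ, IntervalIntegrable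
      (fun u : ℝ => R u * Complex.exp ((w - 1) * (Real.log u : ℂ))) volume (ι n) (ι (n + 1)) := by
    intro n
    have h1 : IntervalIntegrable
        (fun u : ℝ => R (ι n) * Complex.exp ((w - 1) * (Real.log u : ℂ)))
        volume (ι n) (ι (n + 1)) := (continuousOn_const.mul (hgcont n)).intervalIntegrable
    rw [intervalIntegrable_iff] at h1 ⊢
    refine h1.congr ?_
    refine ((ae_restrict_iff' measurableSet_uIoc).mpr ?_)
    filter_upwards [hmeq n] with u hu hmem
    exact (hu hmem).symm
  -- integrability on long intervals
  have hIntMN : ∀ m k : ℕ, IntervalIntegrable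
      (fun u : ℝ => R u * Complex.exp ((w - 1) * (Real.log u : ℂ))) volume (ι m) (ι (m + k)) := by
    intro m k
    induction k with
    | zero => exact IntervalIntegrable.refl
    | succ k ih => exact ih.trans (hInt (m + k))
  -- value of the integral on each small interval
  have hval : ∀ n : ℕ,
      w * ∫ u in (ι n)..(ι (n + 1)), R u * Complex.exp ((w - 1) * (Real.log u : ℂ))
        = R (ι n) * (Complex.exp (w * (Real.log (ι (n + 1)) : ℂ))
            - Complex.exp (w * (Real.log (ι n) : ℂ))) := by
    intro n
    have hab : ι n ≤ ι (n + 1) := (hι n.lt_succ_self).le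
    have hIeq : (∫ u in (ι n)..(ι (n + 1)), R u * Complex.exp ((w - 1) * (Real.log u : ℂ)))
        = ∫ u in (ι n)..(ι (n + 1)), R (ι n) * Complex.exp ((w - 1) * (Real.log u : ℂ)) :=
      intervalIntegral.integral_congr_ae (hmeq n)
    have hFTC : (∫ u in (ι n)..(ι (n + 1)), w * Complex.exp ((w - 1) * (Real.log u : ℂ)))
        = Complex.exp (w * (Real.log (ι (n + 1)) : ℂ))
          - Complex.exp (w * (Real.log (ι n) : ℂ)) := by
      refine intervalIntegral.integral_eq_sub_of_hasDerivAt
        (f := fun u : ℝ => Complex.exp (w * (Real.log u : ℂ)))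
        (f' := fun u : ℝ => w * Complex.exp ((w - 1) * (Real.log u : ℂ)))
        (fun x hx => ?_)
        (continuousOn_const.mul (hgcont n)).intervalIntegrable
      rw [Set.uIcc_of_le hab] at hx
      exact aux_deriv w ((hιpos n).trans_le hx.1)
    rw [hIeq, intervalIntegral.integral_const_mul, ← hFTC,
      intervalIntegral.integral_const_mul]
    ring
  -- main induction
  have hMN' : M + 1 ≤ N := hMN
  clear hMN
  induction N, hMN' using Nat.le_induction with
  | base =>
    rw [Finset.Icc_self, Finset.sum_singleton, hterm (M + 1)]
    linear_combination (-1 : ℂ) * hval M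
      - Complex.exp (w * (Real.log (ι (M + 1)) : ℂ)) * hdiff M
  | succ N hN ih =>
    rw [Finset.sum_Icc_succ_top (by omega : M + 1 ≤ N + 1), ih, hterm (N + 1)]
    have hIab : IntervalIntegrable
        (fun u : ℝ => R u * Complex.exp ((w - 1) * (Real.log u : ℂ))) volume (ι M) (ι N) := by
      have := hIntMN M (N - M)
      rwa [show M + (N - M) = N by omega] at this
    have hadd := intervalIntegral.integral_add_adjacent_intervals hIab (hInt N)
    rw [← hadd]
    linear_combination (-1 : ℂ) * hval N
      - Complex.exp (w * (Real.log (ι (N + 1)) : ℂ)) * hdiff N
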